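/- arXiv:2204.11711 — 3 statements merged into one kernel-verified Lean document; each statement's English description precedes it below -/
import Mathlib

section
/- Let $a_1,a_2>0$ and $\beta>\max\{a_1,a_2\}$, and set $\gamma_1=\frac{\beta-a_2}{\beta^2-a_1a_2}$, $\gamma_2=\frac{\beta-a_1}{\beta^2-a_1a_2}$. Then $3a_1\gamma_1+\beta\gamma_2\in(1,3)$. -/
theorem stmt_2 (a₁ a₂ β : ℝ) (ha₁ : 0 < a₁) (ha₂ : 0 < a₂) (hβ : max a₁ a₂ < β)
    (γ₁ γ₂ : ℝ) (hγ₁ : γ₁ = (β - a₂) / (β ^ 2 - a₁ * a₂))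
    (hγ₂ : γ₂ = (β - a₁) / (β ^ 2 - a₁ * a₂)) :
    3 * a₁ * γ₁ + β * γ₂ ∈ Set.Ioo (1 : ℝ) 3 := by
  have h1 : a₁ < β := lt_of_le_of_lt (le_max_left _ _) hβ
  have h2 : a₂ < β := lt_of_le_of_lt (le_max_right _ _) hβ
  have hD : 0 < β ^ 2 - a₁ * a₂ := by nlinarith
  have key : 3 * a₁ * γ₁ + β * γ₂
      = (3 * a₁ * (β - a₂) + β * (β - a₁)) / (β ^ 2 - a₁ * a₂) := by
    rw [hγ₁, hγ₂]; ring
  constructor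
  · rw [key, lt_div_iff₀ hD]; nlinarith
  · rw [key, div_lt_iff₀ hD]; nlinarith
end

section
/- Let $a_1,a_2>0$ and $\beta>\max\{a_1,a_2\}$, and set $\gamma_1=\frac{\beta-a_2}{\beta^2-a_1a_2}$, $\gamma_2=\frac{\beta-a_1}{\beta^2-a_1a_2}$. Then $a_1\gamma_1^2+a_2\gamma_2^2+2\beta\gamma_1\gamma_2<\min\{1/a_1,\,1/a_2\}$. -/
theorem stmt_4 (a₁ a₂ β : ℝ) (ha₁ : 0 < a₁) (ha₂ : 0 < a₂) (hβ : max a₁ a₂ < β)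
    (γ₁ γ₂ : ℝ) (hγ₁ : γ₁ = (β - a₂) / (β ^ 2 - a₁ * a₂))
    (hγ₂ : γ₂ = (β - a₁) / (β ^ 2 - a₁ * a₂)) :
    a₁ * γ₁ ^ 2 + a₂ * γ₂ ^ 2 + 2 * β * γ₁ * γ₂ < min (1 / a₁) (1 / a₂) := by
  have h1 : a₁ < β := lt_of_le_of_lt (le_max_left _ _) hβ
  have h2 : a₂ < β := lt_of_le_of_lt (le_max_right _ _) hβ
  have hD : 0 < β ^ 2 - a₁ * a₂ := by nlinarith
  subst hγ₁ hγ₂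
  have hD' : (β ^ 2 - a₁ * a₂) ≠ 0 := ne_of_gt hD
  have key : a₁ * ((β - a₂) / (β ^ 2 - a₁ * a₂)) ^ 2 + a₂ * ((β - a₁) / (β ^ 2 - a₁ * a₂)) ^ 2 +
      2 * β * ((β - a₂) / (β ^ 2 - a₁ * a₂)) * ((β - a₁) / (β ^ 2 - a₁ * a₂)) =
      (2 * β - a₁ - a₂) / (β ^ 2 - a₁ * a₂) := by
    field_simp
    ring
  rw [key]
  refine lt_min ?_ ?_
  · rw [div_lt_div_iff₀ hD ha₁]
    nlinarith [sq_nonneg (β - a₁)]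
  · rw [div_lt_div_iff₀ hD ha₂]
    nlinarith [sq_nonneg (β - a₂)]
end

section
/- Let $w:\mathbb{R}^N\to(0,\infty)$ be radial, $w(x)=\rho(|x|)$ with $\rho$ strictly decreasing and $w\in L^2$ with $|x|^{p-1}w^2\in L^1$ for some $p>1$. If $y\in\mathbb{R}^N$ satisfies $\int_{\mathbb{R}^N}|x+y|^{p-2}(x+y)_j\,w^2(x)\,dx=0$ for all $j=1,\dots,N$, then $y=0$. -/
open MeasureTheory


lemma coord_le_norm {N : ℕ} (v : EuclideanSpace ℝ (Fin N)) (j : Fin N) : |v j| ≤ ‖v‖ := by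
  rw [EuclideanSpace.norm_eq]
  have h1 : |v j| = Real.sqrt (‖v j‖ ^ 2) := by rw [Real.sqrt_sq_eq_abs]; simp
  rw [h1]
  exact Real.sqrt_le_sqrt <|
    Finset.single_le_sum (f := fun i => ‖v i‖ ^ 2) (fun i _ => sq_nonneg _) (Finset.mem_univ j)

lemma grad_mono {E : Type*} [NormedAddCommGroup E] [InnerProductSpace ℝ E]
    {p : ℝ} (hp : 1 < p) {a b : E} (hab : a ≠ b) :
    0 < (inner ℝ (‖a‖ ^ (p-2) • a - ‖b‖ ^ (p-2) • b) (a - b) : ℝ) := by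
  have key : (inner ℝ (‖a‖ ^ (p-2) • a - ‖b‖ ^ (p-2) • b) (a - b) : ℝ)
      = ‖a‖ ^ (p-2) * (‖a‖ ^ 2 - inner ℝ a b) + ‖b‖ ^ (p-2) * (‖b‖ ^ 2 - inner ℝ a b) := by
    simp [inner_sub_left, inner_sub_right, real_inner_smul_left,
      real_inner_self_eq_norm_sq, real_inner_comm b a]
    ring
  rw [key]
  rcases eq_or_ne a 0 with ha | ha
  · have hb : b ≠ 0 := fun h => hab (by rw [ha, h])
    have hB : (0:ℝ) < ‖b‖ := norm_pos_iff.2 hb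
    rw [ha]
    simp only [norm_zero, inner_zero_left]
    have : (0:ℝ) ^ (p-2) * ((0:ℝ)^2 - 0) = 0 := by ring
    rw [this]
    have := Real.rpow_pos_of_pos hB (p-2)
    nlinarith [sq_nonneg ‖b‖, mul_pos this (mul_pos hB hB)]
  rcases eq_or_ne b 0 with hb | hb
  · have hA : (0:ℝ) < ‖a‖ := norm_pos_iff.2 ha
    rw [hb]
    simp only [norm_zero, inner_zero_right]
    have : (0:ℝ) ^ (p-2) * ((0:ℝ)^2 - 0) = 0 := by ring
    rw [this]
    have := Real.rpow_pos_of_pos hA (p-2)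
    nlinarith [mul_pos this (mul_pos hA hA)]
  · have hA : (0:ℝ) < ‖a‖ := norm_pos_iff.2 ha
    have hB : (0:ℝ) < ‖b‖ := norm_pos_iff.2 hb
    have hpa := Real.rpow_pos_of_pos hA (p-2)
    have hpb := Real.rpow_pos_of_pos hB (p-2)
    have ht : (inner ℝ a b : ℝ) ≤ ‖a‖ * ‖b‖ := real_inner_le_norm a b
    rcases eq_or_ne ‖a‖ ‖b‖ with hAB | hAB
    · have hd : (0:ℝ) < ‖a - b‖ := norm_pos_iff.2 (sub_ne_zero.2 hab)
      have hsq : ‖a - b‖^2 = ‖a‖^2 - 2 * inner ℝ a b + ‖b‖^2 := norm_sub_sq_real a b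
      rw [← hAB] at hsq ⊢
      nlinarith [mul_pos hpa (mul_pos hd hd)]
    · have hApb : ‖a‖ ^ (p-2) * ‖a‖ = ‖a‖ ^ (p-1) := by
        rw [← Real.rpow_add_one (ne_of_gt hA)]; congr 1; ring
      have hBpb : ‖b‖ ^ (p-2) * ‖b‖ = ‖b‖ ^ (p-1) := by
        rw [← Real.rpow_add_one (ne_of_gt hB)]; congr 1; ring
      have h6 : (‖a‖^(p-1) - ‖b‖^(p-1)) * (‖a‖ - ‖b‖)
          ≤ ‖a‖ ^ (p-2) * (‖a‖ ^ 2 - inner ℝ a b) + ‖b‖ ^ (p-2) * (‖b‖ ^ 2 - inner ℝ a b) := by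
        rw [← hApb, ← hBpb]
        nlinarith [mul_nonneg (add_pos hpa hpb).le (sub_nonneg.2 ht)]
      have h7 : (0:ℝ) < (‖a‖^(p-1) - ‖b‖^(p-1)) * (‖a‖ - ‖b‖) := by
        rcases lt_or_gt_of_ne hAB with h | h
        · have : ‖a‖^(p-1) < ‖b‖^(p-1) := Real.rpow_lt_rpow hA.le h (by linarith)
          exact mul_pos_of_neg_of_neg (by linarith) (by linarith)
        · have : ‖b‖^(p-1) < ‖a‖^(p-1) := Real.rpow_lt_rpow hB.le h (by linarith)
          exact mul_pos (by linarith) (by linarith)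
      linarith

lemma rpow_add_le_two_rpow {a b q : ℝ} (ha : 0 ≤ a) (hb : 0 ≤ b) (hq : 0 ≤ q) :
    (a + b) ^ q ≤ 2 ^ q * (a ^ q + b ^ q) := by
  have h1 : a + b ≤ 2 * max a b := by
    rcases max_cases a b with ⟨h, h'⟩ | ⟨h, h'⟩ <;> rw [h] <;> linarith
  calc (a + b) ^ q ≤ (2 * max a b) ^ q :=
        Real.rpow_le_rpow (by linarith) h1 hq
    _ = 2 ^ q * (max a b) ^ q := Real.mul_rpow (by norm_num) (le_max_of_le_left ha)
    _ ≤ 2 ^ q * (a ^ q + b ^ q) := by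
        apply mul_le_mul_of_nonneg_left _ (Real.rpow_nonneg (by norm_num) q)
        rcases max_cases a b with ⟨h, h'⟩ | ⟨h, h'⟩ <;> rw [h] <;>
          [nlinarith [Real.rpow_nonneg hb q]; nlinarith [Real.rpow_nonneg ha q]]

lemma norm_rpow_mul_coord_le {N : ℕ} (u : EuclideanSpace ℝ (Fin N)) (j : Fin N)
    {p : ℝ} (hp : 1 < p) (hcoord : |u j| ≤ ‖u‖) :
    ‖u‖ ^ (p-2) * |u j| ≤ ‖u‖ ^ (p-1) := by
  rcases eq_or_ne u 0 with hu | hu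
  · subst hu
    simp only [norm_zero]
    rw [Real.zero_rpow (by linarith : p - 1 ≠ 0)]
    have : |(0 : EuclideanSpace ℝ (Fin N)) j| = 0 := by simp
    rw [this, mul_zero]
  · have hA : (0:ℝ) < ‖u‖ := norm_pos_iff.2 hu
    have : ‖u‖ ^ (p-2) * ‖u‖ = ‖u‖ ^ (p-1) := by
      rw [← Real.rpow_add_one (ne_of_gt hA)]; congr 1; ring
    calc ‖u‖ ^ (p-2) * |u j| ≤ ‖u‖ ^ (p-2) * ‖u‖ :=
          mul_le_mul_of_nonneg_left hcoord (Real.rpow_pos_of_pos hA _).le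
      _ = ‖u‖ ^ (p-1) := this

/-- If `w` is a positive, strictly radially decreasing profile with suitable
integrability, and all weighted first moments `∫ |x+y|^{p-2}(x+y)ⱼ w²(x) dx` vanish,
then the translation `y` must be `0`. -/
theorem stmt_8 {N : ℕ} (w : EuclideanSpace ℝ (Fin N) → ℝ) (ρ : ℝ → ℝ)
    (hrad : ∀ x, w x = ρ ‖x‖) (hpos : ∀ x, 0 < w x)
    (hdec : StrictAntiOn ρ (Set.Ici (0 : ℝ)))
    (hL2 : Integrable (fun x : EuclideanSpace ℝ (Fin N) => (w x) ^ 2))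
    (p : ℝ) (hp : 1 < p)
    (hint : Integrable (fun x : EuclideanSpace ℝ (Fin N) => ‖x‖ ^ (p - 1) * (w x) ^ 2))
    (y : EuclideanSpace ℝ (Fin N))
    (hmom : ∀ j : Fin N,
      ∫ x : EuclideanSpace ℝ (Fin N), ‖x + y‖ ^ (p - 2) * ((x + y) j) * (w x) ^ 2 = 0) :
    y = 0 := by
  by_contra hy
  have hp1 : (0:ℝ) ≤ p - 1 := by linarith
  have wsm : AEStronglyMeasurable (fun x : EuclideanSpace ℝ (Fin N) => w x ^ 2) volume :=
    hL2.aestronglyMeasurable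
  -- integrability of the dominating function
  have hdom : ∀ c : ℝ, 0 ≤ c →
      Integrable (fun x : EuclideanSpace ℝ (Fin N) => (‖x‖ + c) ^ (p-1) * w x ^ 2) := by
    intro c hc
    have hbig : Integrable (fun x : EuclideanSpace ℝ (Fin N) =>
        2 ^ (p-1) * (‖x‖ ^ (p-1) * w x ^ 2 + c ^ (p-1) * w x ^ 2)) :=
      ((hint.add (hL2.const_mul (c ^ (p-1)))).const_mul _)
    apply hbig.mono'
    · exact (((continuous_norm.add continuous_const).rpow_const
        (fun x => Or.inr hp1)).aestronglyMeasurable).mul wsm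
    · filter_upwards with x
      have h1 : (0:ℝ) ≤ (‖x‖ + c) ^ (p-1) * w x ^ 2 :=
        mul_nonneg (Real.rpow_nonneg (by positivity) _) (sq_nonneg _)
      rw [Real.norm_of_nonneg h1]
      have h2 := rpow_add_le_two_rpow (norm_nonneg x) hc hp1
      nlinarith [sq_nonneg (w x)]
  -- integrability of each moment integrand
  have hfint : ∀ (z : EuclideanSpace ℝ (Fin N)) (j : Fin N),
      Integrable (fun x : EuclideanSpace ℝ (Fin N) =>
        ‖x + z‖ ^ (p-2) * ((x + z) j) * w x ^ 2) := by
    intro z j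
    apply (hdom ‖z‖ (norm_nonneg z)).mono'
    · apply AEStronglyMeasurable.mul _ wsm
      apply Measurable.aestronglyMeasurable
      have h1 : Measurable fun x : EuclideanSpace ℝ (Fin N) => ‖x + z‖ ^ (p-2) := by
        have hcont : Continuous fun x : EuclideanSpace ℝ (Fin N) => ‖x + z‖ :=
          (continuous_id.add continuous_const).norm
        measurability
      exact h1.mul (Continuous.measurable (by fun_prop :
        Continuous fun x : EuclideanSpace ℝ (Fin N) => (x + z) j))
    · filter_upwards with x
      have hc : |(x + z) j| ≤ ‖x + z‖ := coord_le_norm _ j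
      have key : ‖x + z‖ ^ (p-2) * |(x + z) j| ≤ ‖x + z‖ ^ (p-1) :=
        norm_rpow_mul_coord_le (x + z) j hp hc
      have h2 : ‖x + z‖ ^ (p-1) ≤ (‖x‖ + ‖z‖) ^ (p-1) :=
        Real.rpow_le_rpow (norm_nonneg _) (norm_add_le x z) hp1
      rw [Real.norm_eq_abs, abs_mul, abs_mul]
      have h3 : |‖x + z‖ ^ (p-2)| = ‖x + z‖ ^ (p-2) :=
        abs_of_nonneg (Real.rpow_nonneg (norm_nonneg _) _)
      have h4 : |w x ^ 2| = w x ^ 2 := abs_of_nonneg (sq_nonneg _)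
      rw [h3, h4]
      have h5 : (0:ℝ) ≤ w x ^ 2 := sq_nonneg _
      calc ‖x + z‖ ^ (p-2) * |(x + z) j| * w x ^ 2
          ≤ ‖x + z‖ ^ (p-1) * w x ^ 2 := mul_le_mul_of_nonneg_right key h5
        _ ≤ (‖x‖ + ‖z‖) ^ (p-1) * w x ^ 2 := mul_le_mul_of_nonneg_right h2 h5
  -- rewriting sums
  have hsum : ∀ (z x : EuclideanSpace ℝ (Fin N)),
      ‖x + z‖ ^ (p-2) * (∑ j, (x + z) j * y j) * w x ^ 2
      = ∑ j, y j * (‖x + z‖ ^ (p-2) * ((x + z) j) * w x ^ 2) := by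
    intro z x
    simp only [Finset.mul_sum, Finset.sum_mul]
    exact Finset.sum_congr rfl fun j _ => by ring
  -- integrability of F and H
  have hFint : Integrable (fun x : EuclideanSpace ℝ (Fin N) =>
      ‖x + y‖ ^ (p-2) * (∑ j, (x + y) j * y j) * w x ^ 2) := by
    have h0 : Integrable (fun x : EuclideanSpace ℝ (Fin N) =>
        ∑ j, y j * (‖x + y‖ ^ (p-2) * ((x + y) j) * w x ^ 2)) :=
      integrable_finset_sum _ fun j _ => (hfint y j).const_mul _
    exact h0.congr (Filter.Eventually.of_forall fun x => (hsum y x).symm)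
  have hf0 : ∀ j : Fin N, Integrable (fun x : EuclideanSpace ℝ (Fin N) =>
      ‖x‖ ^ (p-2) * (x j) * w x ^ 2) := by
    intro j
    have := hfint 0 j
    simpa using this
  have hHint : Integrable (fun x : EuclideanSpace ℝ (Fin N) =>
      ‖x‖ ^ (p-2) * (∑ j, x j * y j) * w x ^ 2) := by
    have h0 : Integrable (fun x : EuclideanSpace ℝ (Fin N) =>
        ∑ j, y j * (‖x‖ ^ (p-2) * (x j) * w x ^ 2)) :=
      integrable_finset_sum _ fun j _ => (hf0 j).const_mul _
    apply h0.congr (Filter.Eventually.of_forall fun x => ?_)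
    have := hsum 0 x
    simpa using this.symm
  -- ∫ F = 0
  have hFzero : ∫ x : EuclideanSpace ℝ (Fin N),
      ‖x + y‖ ^ (p-2) * (∑ j, (x + y) j * y j) * w x ^ 2 = 0 := by
    have h1 : ∫ x : EuclideanSpace ℝ (Fin N),
        ∑ j, y j * (‖x + y‖ ^ (p-2) * ((x + y) j) * w x ^ 2)
        = ∑ j : Fin N, ∫ x : EuclideanSpace ℝ (Fin N),
            y j * (‖x + y‖ ^ (p-2) * ((x + y) j) * w x ^ 2) :=
      integral_finset_sum _ fun j _ => (hfint y j).const_mul _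
    have h2 : ∀ j : Fin N, ∫ x : EuclideanSpace ℝ (Fin N),
        y j * (‖x + y‖ ^ (p-2) * ((x + y) j) * w x ^ 2) = 0 := by
      intro j
      rw [integral_const_mul]
      have h3 := hmom j
      simp only [mul_assoc] at h3 ⊢
      rw [h3, mul_zero]
    calc ∫ x : EuclideanSpace ℝ (Fin N),
          ‖x + y‖ ^ (p-2) * (∑ j, (x + y) j * y j) * w x ^ 2
        = ∫ x : EuclideanSpace ℝ (Fin N),
            ∑ j, y j * (‖x + y‖ ^ (p-2) * ((x + y) j) * w x ^ 2) := by
          congr 1; funext x; exact hsum y x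
      _ = ∑ j : Fin N, ∫ x : EuclideanSpace ℝ (Fin N),
            y j * (‖x + y‖ ^ (p-2) * ((x + y) j) * w x ^ 2) := h1
      _ = 0 := Finset.sum_eq_zero fun j _ => h2 j
  -- ∫ H = 0 by odd symmetry
  have hHzero : ∫ x : EuclideanSpace ℝ (Fin N),
      ‖x‖ ^ (p-2) * (∑ j, x j * y j) * w x ^ 2 = 0 := by
    set H : EuclideanSpace ℝ (Fin N) → ℝ :=
      fun x => ‖x‖ ^ (p-2) * (∑ j, x j * y j) * w x ^ 2 with hH
    have hodd : ∀ x : EuclideanSpace ℝ (Fin N), H (-x) = - H x := by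
      intro x
      have hw : w (-x) = w x := by rw [hrad (-x), hrad x, norm_neg]
      simp only [hH, norm_neg, hw]
      have hns : ∑ j, (-x) j * y j = -∑ j, x j * y j := by
        rw [← Finset.sum_neg_distrib]
        exact Finset.sum_congr rfl fun j _ => by
          simp only [PiLp.neg_apply]; ring
      rw [hns]; ring
    have hrefl := integral_neg_eq_self H volume
    simp only [hodd] at hrefl
    rw [integral_neg] at hrefl
    linarith
  -- the positive combination
  set P : EuclideanSpace ℝ (Fin N) → ℝ := fun x =>
    (‖x + y‖ ^ (p-2) * (∑ j, (x + y) j * y j) - ‖x‖ ^ (p-2) * (∑ j, x j * y j)) * w x ^ 2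
    with hPdef
  have hPint : Integrable P := by
    apply (hFint.sub hHint).congr (Filter.Eventually.of_forall fun x => ?_)
    simp only [Pi.sub_apply, hPdef]; ring
  have hPzero : ∫ x : EuclideanSpace ℝ (Fin N), P x = 0 := by
    have hsub : ∫ x : EuclideanSpace ℝ (Fin N), P x
        = (∫ x : EuclideanSpace ℝ (Fin N), ‖x + y‖ ^ (p-2) * (∑ j, (x + y) j * y j) * w x ^ 2)
        - ∫ x : EuclideanSpace ℝ (Fin N), ‖x‖ ^ (p-2) * (∑ j, x j * y j) * w x ^ 2 := by
      rw [← integral_sub hFint hHint]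
      congr 1; funext x; simp only [hPdef]; ring
    rw [hsub, hFzero, hHzero, sub_zero]
  have hPpos : ∀ x : EuclideanSpace ℝ (Fin N), 0 < P x := by
    intro x
    have hab : x + y ≠ x := fun h => hy (by simpa using h)
    have hgm := grad_mono hp hab (p := p)
    have hinner : (inner ℝ (‖x + y‖ ^ (p-2) • (x + y) - ‖x‖ ^ (p-2) • x) ((x + y) - x) : ℝ)
        = ‖x + y‖ ^ (p-2) * (∑ j, (x + y) j * y j) - ‖x‖ ^ (p-2) * (∑ j, x j * y j) := by
      have hxy : (x + y) - x = y := by abel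
      rw [hxy]
      simp only [PiLp.inner_apply, RCLike.inner_apply, conj_trivial, PiLp.sub_apply,
        PiLp.smul_apply, smul_eq_mul]
      simp only [sub_mul, mul_sub, Finset.sum_sub_distrib, Finset.mul_sum]
      congr 1 <;> exact Finset.sum_congr rfl fun j _ => by ring
    rw [hinner] at hgm
    exact mul_pos hgm (pow_pos (hpos x) 2)
  have hfinal : 0 < ∫ x : EuclideanSpace ℝ (Fin N), P x := by
    rw [integral_pos_iff_support_of_nonneg (fun x => (hPpos x).le) hPint]
    have hsupp : Function.support P = Set.univ :=
      Set.eq_univ_iff_forall.2 fun x => (hPpos x).ne'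
    rw [hsupp]
    exact isOpen_univ.measure_pos volume ⟨0, trivial⟩
  linarith
end
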